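/- Let R be an integral domain, f, g ∈ R⟦t⟧[x_1,...,x_n] nonzero, and w ∈ ℝ_{<0}×ℝ^n. Then in_w(f·g) = in_w(f)·in_w(g). -/

import Mathlib

open MvPolynomial

noncomputable section

variable {R : Type*} [CommRing R] {n : ℕ}

/-- The mixed power-series–polynomial ring `R⟦t⟧[x₁,…,xₙ]`. -/
abbrev MixedRing (R : Type*) [CommRing R] (n : ℕ) :=
  MvPolynomial (Fin n) (PowerSeries R)

/-- The polynomial ring `R[t][x₁,…,xₙ] = R[t,x]`. -/
abbrev PolyRing (R : Type*) [CommRing R] (n : ℕ) :=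
  MvPolynomial (Fin n) (Polynomial R)

/-- A monomial `t^β x^α` is encoded as the pair `(α, β)`. -/
abbrev Mon (n : ℕ) := (Fin n →₀ ℕ) × ℕ

/-- The coefficient of `f ∈ R⟦t⟧[x]` at the monomial `t^β x^α`. -/
def coeffAt (f : MixedRing R n) (m : Mon n) : R :=
  PowerSeries.coeff m.2 (MvPolynomial.coeff m.1 f)

/-- The coefficient of `q ∈ R[t,x]` at the monomial `t^β x^α`. -/
def coeffAtP (q : PolyRing R n) (m : Mon n) : R :=
  (MvPolynomial.coeff m.1 q).coeff m.2

/-- The `w`-weighted degree of the monomial `t^β x^α`, where `w = (w₀, w₁,…,wₙ)`. -/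
def wdeg (w0 : ℝ) (w : Fin n → ℝ) (m : Mon n) : ℝ :=
  w0 * m.2 + ∑ i, w i * (m.1 i : ℝ)

/-- The maximal `w`-weighted degree of a term of `f ∈ R⟦t⟧[x]`
(as a supremum; it is attained when `w₀ < 0` and `f ≠ 0`). -/
def maxdeg (w0 : ℝ) (w : Fin n → ℝ) (f : MixedRing R n) : ℝ :=
  sSup (wdeg w0 w '' {m | coeffAt f m ≠ 0})

/-- The least power of `t` occurring in a power series `s` (junk value `0` for `s = 0`). -/
def tord (s : PowerSeries R) : ℕ :=
  sInf {k | PowerSeries.coeff k s ≠ 0}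

open Classical in
/-- The initial form `in_w(f)` of `f ∈ R⟦t⟧[x]` with respect to the weight
vector `w = (w₀, w) ∈ ℝ_{<0} × ℝⁿ`: the sum of the terms of `f` of maximal
`w`-weighted degree.  Since `w₀ < 0`, for each `x`-monomial `x^α` only the term
of least `t`-order can contribute, so the initial form is a polynomial in
`R[t,x]`. -/
def initialForm (w0 : ℝ) (w : Fin n → ℝ) (f : MixedRing R n) : PolyRing R n :=
  ∑ α ∈ f.support,
    if wdeg w0 w (α, tord (MvPolynomial.coeff α f)) = maxdeg w0 w f then
      MvPolynomial.monomial α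
        (Polynomial.monomial (tord (MvPolynomial.coeff α f))
          (PowerSeries.coeff (tord (MvPolynomial.coeff α f)) (MvPolynomial.coeff α f)))
    else 0

/-- `r` is a `t`-local monomial ordering on `Mon(t,x)`: a strict total order
(`r a b` meaning `a < b`) compatible with the semigroup structure and with
`t < 1` (so that leading monomials — the largest monomials occurring — of unit
power series are `1`). -/
def IsTLocalOrder (r : Mon n → Mon n → Prop) : Prop :=
  (∀ a b, a ≠ b → r a b ∨ r b a) ∧ (∀ a, ¬ r a a) ∧
  (∀ a b c, r a b → r b c → r a c) ∧
  (∀ a b c, r a b → r (a + c) (b + c)) ∧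
  r ((0 : Fin n →₀ ℕ), 1) ((0 : Fin n →₀ ℕ), 0)

/-- `f ∈ R⟦t⟧[x]` has leading term `c · t^β x^α` (with `m = (α,β)`) with respect
to the ordering `r`: the coefficient of `f` at `m` is `c ≠ 0` and every other
monomial occurring in `f` is `r`-smaller than `m`. -/
def IsLeadingTerm (r : Mon n → Mon n → Prop) (f : MixedRing R n) (m : Mon n) (c : R) : Prop :=
  coeffAt f m = c ∧ c ≠ 0 ∧ ∀ m', coeffAt f m' ≠ 0 → m' = m ∨ r m' m

/-- Leading-term predicate for elements of `R[t,x]`. -/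
def IsLeadingTermP (r : Mon n → Mon n → Prop) (q : PolyRing R n) (m : Mon n) (c : R) : Prop :=
  coeffAtP q m = c ∧ c ≠ 0 ∧ ∀ m', coeffAtP q m' ≠ 0 → m' = m ∨ r m' m

/-- The term `c · t^β x^α` as an element of `R[t,x]`. -/
def termA (m : Mon n) (c : R) : PolyRing R n :=
  MvPolynomial.monomial m.1 (Polynomial.monomial m.2 c)

/-- The leading ideal `lt_>(I) ⊆ R[t,x]` of an ideal `I ⊆ R⟦t⟧[x]`. -/
def ltIdeal (r : Mon n → Mon n → Prop) (I : Ideal (MixedRing R n)) : Ideal (PolyRing R n) :=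
  Ideal.span {q | ∃ f ∈ I, ∃ m c, IsLeadingTerm r f m c ∧ q = termA m c}

/-- The ideal of `R[t,x]` generated by the leading terms of a finite set `G ⊆ R⟦t⟧[x]`. -/
def ltSpan (r : Mon n → Mon n → Prop) (G : Finset (MixedRing R n)) : Ideal (PolyRing R n) :=
  Ideal.span {q | ∃ f ∈ G, ∃ m c, IsLeadingTerm r f m c ∧ q = termA m c}

/-- The leading ideal of an ideal `J ⊆ R[t,x]`. -/
def ltIdealP (r : Mon n → Mon n → Prop) (J : Ideal (PolyRing R n)) : Ideal (PolyRing R n) :=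
  Ideal.span {q | ∃ f ∈ J, ∃ m c, IsLeadingTermP r f m c ∧ q = termA m c}

/-- The initial ideal `in_w(I) ⊆ R[t,x]` of an ideal `I ⊆ R⟦t⟧[x]`. -/
def initialIdeal (w0 : ℝ) (w : Fin n → ℝ) (I : Ideal (MixedRing R n)) : Ideal (PolyRing R n) :=
  Ideal.span {q | ∃ f ∈ I, q = initialForm w0 w f}

/-- `f ∈ R⟦t⟧[x]` is `x`-homogeneous: all monomials occurring in `f` have the
same total degree in the variables `x₁,…,xₙ`. -/
def IsXHomogeneous (f : MixedRing R n) : Prop :=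
  ∃ d, ∀ α ∈ f.support, (α.sum fun _ e => e) = d

/-- An ideal `I ⊆ R⟦t⟧[x]` is `x`-homogeneous if it is generated by
`x`-homogeneous elements. -/
def Ideal.IsXHomogeneousIdeal (I : Ideal (MixedRing R n)) : Prop :=
  ∃ S : Set (MixedRing R n), (∀ f ∈ S, IsXHomogeneous f) ∧ I = Ideal.span S

/-- The `t`-initial truncation `Σ_α lt_>(g_α)·x^α` of `g = Σ_α g_α·x^α ∈ R⟦t⟧[x]`,
keeping for each `x`-monomial only the term of least `t`-power. -/
def tTrunc (g : MixedRing R n) : MixedRing R n :=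
  ∑ α ∈ g.support,
    MvPolynomial.monomial α
      ((PowerSeries.monomial (tord (MvPolynomial.coeff α g)))
        (PowerSeries.coeff (tord (MvPolynomial.coeff α g)) (MvPolynomial.coeff α g)))

/-- `G` is a standard basis of the ideal `I ⊆ R⟦t⟧[x]` with respect to `r`:
`G ⊆ I` and the leading terms of the elements of `G` generate the leading
ideal of `I`. -/
def IsStandardBasis (r : Mon n → Mon n → Prop) (I : Ideal (MixedRing R n))
    (G : Finset (MixedRing R n)) : Prop :=
  ↑G ⊆ (I : Set (MixedRing R n)) ∧ ltSpan r G = ltIdeal r I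

open Classical in
/-- `G` is an initially reduced standard basis of `I` w.r.t. `r`: a standard
basis that is minimal and such that no term of the `t`-initial truncation of
any `g ∈ G`, other than the leading term of `g`, lies in the leading ideal. -/
def IsInitiallyReducedSB (r : Mon n → Mon n → Prop) (I : Ideal (MixedRing R n))
    (G : Finset (MixedRing R n)) : Prop :=
  IsStandardBasis r I G ∧
  (∀ g ∈ G, ltSpan r (G.erase g) ≠ ltSpan r G) ∧
  (∀ g ∈ G, ∀ m, coeffAt (tTrunc g) m ≠ 0 → ¬ (∃ c, IsLeadingTerm r g m c) →
    termA m (coeffAt (tTrunc g) m) ∉ ltIdeal r I)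

/-- The (interior part of the) Gröbner cone `C_>(I)`: the Euclidean closure of
the set of weight vectors `v ∈ ℝ_{<0} × ℝⁿ` with `in_v(I) = lt_>(I)`. -/
def groebnerCone (r : Mon n → Mon n → Prop) (I : Ideal (MixedRing R n)) :
    Set (ℝ × (Fin n → ℝ)) :=
  closure {v : ℝ × (Fin n → ℝ) | v.1 < 0 ∧ initialIdeal v.1 v.2 I = ltIdeal r I}


section AuxLemmas

variable {R : Type*} [CommRing R] {n : ℕ} {w0 : ℝ} {w : Fin n → ℝ}

lemma tord_coeff_ne_zero {s : PowerSeries R} (hs : s ≠ 0) :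
    PowerSeries.coeff (tord s) s ≠ 0 := by
  have hne : {k | PowerSeries.coeff k s ≠ 0}.Nonempty := by
    by_contra h
    rw [Set.not_nonempty_iff_eq_empty, Set.eq_empty_iff_forall_notMem] at h
    exact hs (PowerSeries.ext fun k => by
      have := h k; simpa using this)
  exact Nat.sInf_mem hne

lemma tord_le {s : PowerSeries R} {k : ℕ} (h : PowerSeries.coeff k s ≠ 0) :
    tord s ≤ k := Nat.sInf_le h

lemma wdeg_pair (α : Fin n →₀ ℕ) (β : ℕ) :
    wdeg w0 w (α, β) = w0 * β + ∑ i, w i * (α i : ℝ) := rfl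

lemma wdeg_add (a b : Mon n) :
    wdeg w0 w (a + b) = wdeg w0 w a + wdeg w0 w b := by
  simp only [wdeg, Prod.fst_add, Prod.snd_add, Finsupp.coe_add, Pi.add_apply]
  push_cast
  simp only [mul_add, Finset.sum_add_distrib]
  ring

lemma coeffAt_zero_of (f : MixedRing R n) (m : Mon n)
    (h : MvPolynomial.coeff m.1 f = 0) : coeffAt f m = 0 := by
  rw [coeffAt, h, map_zero]

lemma coeffAt_mul (f g : MixedRing R n) (m : Mon n) :
    coeffAt (f * g) m = ∑ p ∈ Finset.HasAntidiagonal.antidiagonal m.1, ∑ q ∈ Finset.HasAntidiagonal.antidiagonal m.2,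
      coeffAt f (p.1, q.1) * coeffAt g (p.2, q.2) := by
  rw [coeffAt, MvPolynomial.coeff_mul, map_sum]
  exact Finset.sum_congr rfl fun p _ => PowerSeries.coeff_mul _ _ _

lemma coeffAtP_mul (f g : PolyRing R n) (m : Mon n) :
    coeffAtP (f * g) m = ∑ p ∈ Finset.HasAntidiagonal.antidiagonal m.1, ∑ q ∈ Finset.HasAntidiagonal.antidiagonal m.2,
      coeffAtP f (p.1, q.1) * coeffAtP g (p.2, q.2) := by
  rw [coeffAtP, MvPolynomial.coeff_mul, Polynomial.finset_sum_coeff]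
  exact Finset.sum_congr rfl fun p _ => Polynomial.coeff_mul _ _ _

lemma coeffAtP_ext {p q : PolyRing R n} (h : ∀ m, coeffAtP p m = coeffAtP q m) : p = q := by
  apply MvPolynomial.ext
  intro α
  apply Polynomial.ext
  intro k
  exact h (α, k)

lemma exists_coeffAtP_ne_zero {p : PolyRing R n} (hp : p ≠ 0) :
    ∃ m, coeffAtP p m ≠ 0 := by
  by_contra h
  push_neg at h
  exact hp (coeffAtP_ext fun m => by rw [h m]; simp [coeffAtP])

lemma wdeg_le_sup (hw0 : w0 < 0) {f : MixedRing R n} (hf : f ≠ 0) {m : Mon n}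
    (h : coeffAt f m ≠ 0) :
    wdeg w0 w m ≤ f.support.sup' (MvPolynomial.support_nonempty.2 hf)
      (fun α => wdeg w0 w (α, tord (MvPolynomial.coeff α f))) := by
  have h1 : MvPolynomial.coeff m.1 f ≠ 0 := fun h0 => h (coeffAt_zero_of f m h0)
  have h2 : m.1 ∈ f.support := MvPolynomial.mem_support_iff.2 h1
  have h3 : tord (MvPolynomial.coeff m.1 f) ≤ m.2 := tord_le h
  have hle : wdeg w0 w m ≤ wdeg w0 w (m.1, tord (MvPolynomial.coeff m.1 f)) := by
    simp only [wdeg]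
    have : w0 * (m.2 : ℝ) ≤ w0 * (tord (MvPolynomial.coeff m.1 f) : ℝ) :=
      mul_le_mul_of_nonpos_left (by exact_mod_cast h3) hw0.le
    linarith
  exact hle.trans
    (Finset.le_sup' (fun α => wdeg w0 w (α, tord (MvPolynomial.coeff α f))) h2)

lemma maxdeg_eq_sup' (hw0 : w0 < 0) {f : MixedRing R n} (hf : f ≠ 0) :
    maxdeg w0 w f = f.support.sup' (MvPolynomial.support_nonempty.2 hf)
      (fun α => wdeg w0 w (α, tord (MvPolynomial.coeff α f))) := by
  have hne := MvPolynomial.support_nonempty.2 hf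
  set D := f.support.sup' hne
      (fun α => wdeg w0 w (α, tord (MvPolynomial.coeff α f))) with hD
  have hub : ∀ x ∈ wdeg w0 w '' {m | coeffAt f m ≠ 0}, x ≤ D := by
    rintro x ⟨m, hm, rfl⟩
    exact wdeg_le_sup hw0 hf hm
  obtain ⟨α, hα, hαeq⟩ := Finset.exists_mem_eq_sup' hne
      (fun α => wdeg w0 w (α, tord (MvPolynomial.coeff α f)))
  have hαne : MvPolynomial.coeff α f ≠ 0 := MvPolynomial.mem_support_iff.1 hα
  have hmem : wdeg w0 w (α, tord (MvPolynomial.coeff α f)) ∈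
      wdeg w0 w '' {m | coeffAt f m ≠ 0} := by
    refine ⟨(α, tord (MvPolynomial.coeff α f)), ?_, rfl⟩
    exact tord_coeff_ne_zero hαne
  apply le_antisymm
  · exact csSup_le ⟨_, hmem⟩ hub
  · rw [hD, hαeq]
    exact le_csSup ⟨D, hub⟩ hmem

lemma wdeg_le_maxdeg (hw0 : w0 < 0) {f : MixedRing R n} (hf : f ≠ 0) {m : Mon n}
    (h : coeffAt f m ≠ 0) : wdeg w0 w m ≤ maxdeg w0 w f := by
  rw [maxdeg_eq_sup' hw0 hf]
  exact wdeg_le_sup hw0 hf h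

lemma coeff_initialForm (hw0 : w0 < 0) {f : MixedRing R n} (hf : f ≠ 0) (m : Mon n) :
    coeffAtP (initialForm w0 w f) m =
      if wdeg w0 w m = maxdeg w0 w f then coeffAt f m else 0 := by
  classical
  set τ := tord (MvPolynomial.coeff m.1 f) with hτ
  have hcoeff : MvPolynomial.coeff m.1 (initialForm w0 w f) =
      if m.1 ∈ f.support ∧ wdeg w0 w (m.1, τ) = maxdeg w0 w f
      then Polynomial.monomial τ (PowerSeries.coeff τ (MvPolynomial.coeff m.1 f))
      else 0 := by
    rw [initialForm, MvPolynomial.coeff_sum]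
    by_cases hm : m.1 ∈ f.support
    · rw [Finset.sum_eq_single_of_mem m.1 hm (by
        intro α hα hne
        split_ifs
        · rw [MvPolynomial.coeff_monomial, if_neg hne]
        · simp)]
      simp only [hm, true_and]
      split_ifs with hd
      · rw [MvPolynomial.coeff_monomial, if_pos rfl]
      · simp
    · rw [if_neg (fun h => hm h.1)]
      apply Finset.sum_eq_zero
      intro α hα
      split_ifs
      · rw [MvPolynomial.coeff_monomial, if_neg (fun h : α = m.1 => hm (h ▸ hα))]
      · simp
  rw [coeffAtP, hcoeff]
  by_cases hw : wdeg w0 w m = maxdeg w0 w f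
  · rw [if_pos hw]
    by_cases hc : coeffAt f m = 0
    · rw [hc]
      split_ifs with hcond
      · rw [Polynomial.coeff_monomial]
        split_ifs with ht
        · rw [ht]; exact hc
        · rfl
      · simp
    · have h1 : MvPolynomial.coeff m.1 f ≠ 0 := fun h0 => hc (coeffAt_zero_of f m h0)
      have h2 : m.1 ∈ f.support := MvPolynomial.mem_support_iff.2 h1
      have h3 : τ ≤ m.2 := tord_le hc
      have h4 : τ = m.2 := by
        by_contra hne
        have hlt : τ < m.2 := lt_of_le_of_ne h3 hne
        have hstrict : wdeg w0 w m < wdeg w0 w (m.1, τ) := by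
          simp only [wdeg]
          have : w0 * (m.2 : ℝ) < w0 * (τ : ℝ) :=
            mul_lt_mul_of_neg_left (by exact_mod_cast hlt) hw0
          linarith
        have hle : wdeg w0 w (m.1, τ) ≤ maxdeg w0 w f :=
          wdeg_le_maxdeg hw0 hf (show coeffAt f (m.1, τ) ≠ 0 from tord_coeff_ne_zero h1)
        linarith
      have hcond : wdeg w0 w (m.1, τ) = maxdeg w0 w f := by rw [h4]; exact hw
      rw [if_pos ⟨h2, hcond⟩, Polynomial.coeff_monomial, if_pos h4]
      rw [coeffAt, ← h4]
  · rw [if_neg hw]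
    split_ifs with hcond
    · rw [Polynomial.coeff_monomial]
      split_ifs with ht
      · exfalso; apply hw; rw [← hcond.2, ht]
      · rfl
    · simp

lemma exists_attain (hw0 : w0 < 0) {f : MixedRing R n} (hf : f ≠ 0) :
    ∃ m, coeffAt f m ≠ 0 ∧ wdeg w0 w m = maxdeg w0 w f := by
  obtain ⟨α, hα, hαeq⟩ := Finset.exists_mem_eq_sup' (MvPolynomial.support_nonempty.2 hf)
      (fun α => wdeg w0 w (α, tord (MvPolynomial.coeff α f)))
  refine ⟨(α, tord (MvPolynomial.coeff α f)),
    tord_coeff_ne_zero (MvPolynomial.mem_support_iff.1 hα), ?_⟩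
  rw [maxdeg_eq_sup' hw0 hf, hαeq]

lemma initialForm_ne_zero (hw0 : w0 < 0) {f : MixedRing R n} (hf : f ≠ 0) :
    initialForm w0 w f ≠ 0 := by
  obtain ⟨m, hm, hdeg⟩ := exists_attain (w := w) hw0 hf
  intro h
  have := coeff_initialForm (w := w) hw0 hf m
  rw [h, if_pos hdeg] at this
  exact hm (by simpa [coeffAtP] using this.symm)

end AuxLemmas

/-- Over an integral domain, initial forms are multiplicative:
`in_w(f·g) = in_w(f)·in_w(g)` for nonzero `f, g ∈ R⟦t⟧[x]` and
`w ∈ ℝ_{<0} × ℝⁿ`. -/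
theorem initialForm_mul {R : Type*} [CommRing R] [IsDomain R] {n : ℕ}
    (f g : MixedRing R n) (hf : f ≠ 0) (hg : g ≠ 0)
    (w0 : ℝ) (hw0 : w0 < 0) (w : Fin n → ℝ) :
    initialForm w0 w (f * g) = initialForm w0 w f * initialForm w0 w g := by
  classical
  set Df := maxdeg w0 w f with hDf
  set Dg := maxdeg w0 w g with hDg
  have hfg : f * g ≠ 0 := mul_ne_zero hf hg
  have hF : initialForm w0 w f ≠ 0 := initialForm_ne_zero hw0 hf
  have hG : initialForm w0 w g ≠ 0 := initialForm_ne_zero hw0 hg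
  set F := initialForm w0 w f with hFdef
  set G := initialForm w0 w g with hGdef
  have hFc : ∀ m1, coeffAtP F m1 = if wdeg w0 w m1 = Df then coeffAt f m1 else 0 :=
    coeff_initialForm hw0 hf
  have hGc : ∀ m2, coeffAtP G m2 = if wdeg w0 w m2 = Dg then coeffAt g m2 else 0 :=
    coeff_initialForm hw0 hg
  -- key claim: on the top weight level, coefficients agree
  have key : ∀ m : Mon n, wdeg w0 w m = Df + Dg →
      coeffAt (f * g) m = coeffAtP (F * G) m := by
    intro m hm
    rw [coeffAt_mul, coeffAtP_mul]
    refine Finset.sum_congr rfl fun p hp => Finset.sum_congr rfl fun q hq => ?_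
    have hpm : p.1 + p.2 = m.1 := Finset.HasAntidiagonal.mem_antidiagonal.1 hp
    have hqm : q.1 + q.2 = m.2 := Finset.HasAntidiagonal.mem_antidiagonal.1 hq
    have hsum : ((p.1, q.1) : Mon n) + (p.2, q.2) = m := by
      rw [Prod.ext_iff]; exact ⟨hpm, hqm⟩
    have hadd : wdeg w0 w ((p.1, q.1) : Mon n) + wdeg w0 w ((p.2, q.2) : Mon n) = Df + Dg := by
      rw [← wdeg_add, hsum, hm]
    rw [hFc, hGc]
    by_cases hA : wdeg w0 w ((p.1, q.1) : Mon n) = Df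
    · have hB : wdeg w0 w ((p.2, q.2) : Mon n) = Dg := by linarith
      rw [if_pos hA, if_pos hB]
    · rw [if_neg hA, zero_mul]
      by_cases hfc : coeffAt f (p.1, q.1) = 0
      · rw [hfc, zero_mul]
      · have h1 : wdeg w0 w ((p.1, q.1) : Mon n) < Df :=
          lt_of_le_of_ne (wdeg_le_maxdeg hw0 hf hfc) hA
        have h2 : coeffAt g (p.2, q.2) = 0 := by
          by_contra hgc
          have hle : wdeg w0 w ((p.2, q.2) : Mon n) ≤ Dg := wdeg_le_maxdeg hw0 hg hgc
          linarith
        rw [h2, mul_zero]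
  -- coefficients of F * G live only on the top weight level
  have hFG : ∀ m : Mon n, coeffAtP (F * G) m ≠ 0 → wdeg w0 w m = Df + Dg := by
    intro m hne
    rw [coeffAtP_mul] at hne
    obtain ⟨p, hp, hne⟩ := Finset.exists_ne_zero_of_sum_ne_zero hne
    obtain ⟨q, hq, hne⟩ := Finset.exists_ne_zero_of_sum_ne_zero hne
    have hA : wdeg w0 w ((p.1, q.1) : Mon n) = Df := by
      by_contra hA
      rw [hFc, if_neg hA, zero_mul] at hne
      exact hne rfl
    have hB : wdeg w0 w ((p.2, q.2) : Mon n) = Dg := by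
      by_contra hB
      rw [hGc, if_neg hB, mul_zero] at hne
      exact hne rfl
    have hpm : p.1 + p.2 = m.1 := Finset.HasAntidiagonal.mem_antidiagonal.1 hp
    have hqm : q.1 + q.2 = m.2 := Finset.HasAntidiagonal.mem_antidiagonal.1 hq
    have hsum : ((p.1, q.1) : Mon n) + (p.2, q.2) = m := by
      rw [Prod.ext_iff]; exact ⟨hpm, hqm⟩
    rw [← hsum, wdeg_add, hA, hB]
  -- every coefficient of f * g has weight at most Df + Dg
  have hBound : ∀ m : Mon n, coeffAt (f * g) m ≠ 0 → wdeg w0 w m ≤ Df + Dg := by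
    intro m hne
    rw [coeffAt_mul] at hne
    obtain ⟨p, hp, hne⟩ := Finset.exists_ne_zero_of_sum_ne_zero hne
    obtain ⟨q, hq, hne⟩ := Finset.exists_ne_zero_of_sum_ne_zero hne
    have hfc : coeffAt f (p.1, q.1) ≠ 0 := fun h => hne (by rw [h, zero_mul])
    have hgc : coeffAt g (p.2, q.2) ≠ 0 := fun h => hne (by rw [h, mul_zero])
    have h1 : wdeg w0 w ((p.1, q.1) : Mon n) ≤ Df := wdeg_le_maxdeg hw0 hf hfc
    have h2 : wdeg w0 w ((p.2, q.2) : Mon n) ≤ Dg := wdeg_le_maxdeg hw0 hg hgc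
    have hpm : p.1 + p.2 = m.1 := Finset.HasAntidiagonal.mem_antidiagonal.1 hp
    have hqm : q.1 + q.2 = m.2 := Finset.HasAntidiagonal.mem_antidiagonal.1 hq
    have hsum : ((p.1, q.1) : Mon n) + (p.2, q.2) = m := by
      rw [Prod.ext_iff]; exact ⟨hpm, hqm⟩
    calc wdeg w0 w m = wdeg w0 w ((p.1, q.1) : Mon n) + wdeg w0 w ((p.2, q.2) : Mon n) := by
          rw [← hsum, wdeg_add]
      _ ≤ Df + Dg := add_le_add h1 h2
  -- the maximal degree of the product
  have hmax : maxdeg w0 w (f * g) = Df + Dg := by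
    apply le_antisymm
    · obtain ⟨m, hm, hdeg⟩ := exists_attain (w := w) hw0 hfg
      rw [← hdeg]
      exact hBound m hm
    · obtain ⟨m, hm⟩ := exists_coeffAtP_ne_zero (mul_ne_zero hF hG)
      have hdm := hFG m hm
      have hne : coeffAt (f * g) m ≠ 0 := by rw [key m hdm]; exact hm
      calc Df + Dg = wdeg w0 w m := hdm.symm
        _ ≤ maxdeg w0 w (f * g) := wdeg_le_maxdeg hw0 hfg hne
  -- conclude coefficientwise
  apply coeffAtP_ext
  intro m
  rw [coeff_initialForm hw0 hfg m, hmax]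
  by_cases hd : wdeg w0 w m = Df + Dg
  · rw [if_pos hd]
    exact key m hd
  · rw [if_neg hd]
    by_cases h : coeffAtP (F * G) m = 0
    · rw [h]
    · exact absurd (hFG m h) hd

end
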